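/- Let X be exponential with rate λ > 0, and S ≥ 0 independent of X with E[S] = 1/μ and E[e^{−λS}] > 0. Then E[X]/P(S<X) + E[S·1{S<X}]/P(S<X) ≤ (1/λ)e^{λ/μ} + 1/μ, and the right side equals the peak age when S is deterministic equal to 1/μ. -/

import Mathlib

open MeasureTheory ProbabilityTheory Real Set
open scoped ENNReal NNReal

section AuxLemmas

lemma expMeasure_Ioi {r x : ℝ} (hr : 0 < r) (hx : 0 ≤ x) :
    expMeasure r (Ioi x) = ENNReal.ofReal (exp (-(r * x))) := by
  haveI := isProbabilityMeasure_expMeasure hr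
  have hIic : expMeasure r (Iic x) = ENNReal.ofReal (1 - exp (-(r * x))) := by
    rw [← ofReal_cdf (expMeasure r) x]
    congr 1
    have := cdf_expMeasure_eq hr x
    rw [this, if_pos hx]
  have h1 : rexp (-(r * x)) ≤ 1 := exp_le_one_iff.2 (by nlinarith)
  rw [(by simp : Ioi x = (Iic x)ᶜ), measure_compl measurableSet_Iic (measure_ne_top _ _),
    measure_univ, hIic, ← ENNReal.ofReal_one, ← ENNReal.ofReal_sub _ (by linarith)]
  norm_num

lemma expMeasure_mean {r : ℝ} (hr : 0 < r) : ∫ x, x ∂(expMeasure r) = 1 / r := by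
  have hpdf : expMeasure r = volume.withDensity
      (fun x => ((exponentialPDFReal r x).toNNReal : ℝ≥0∞)) := rfl
  rw [hpdf, integral_withDensity_eq_integral_smul
    ((measurable_exponentialPDFReal r).real_toNNReal)]
  have heq : (fun x : ℝ => (exponentialPDFReal r x).toNNReal • x)
      = (Ioi (0:ℝ)).indicator (fun x => r * (x ^ ((2:ℝ) - 1) * exp (-(r * x)))) := by
    funext x
    rw [NNReal.smul_def, smul_eq_mul, Real.coe_toNNReal _ (exponentialPDFReal_nonneg hr x)]
    rw [exponentialPDFReal, gammaPDFReal]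
    rcases lt_trichotomy x 0 with h | h | h
    · rw [if_neg (not_le.2 h), indicator_of_notMem (by simp [h.not_gt]), zero_mul]
    · subst h; simp
    · rw [if_pos h.le, indicator_of_mem (mem_Ioi.2 h)]
      have : x ^ ((2:ℝ) - 1) = x := by norm_num
      rw [this]
      simp [Real.Gamma_one]
      ring
  rw [heq, integral_indicator measurableSet_Ioi, integral_const_mul,
    integral_rpow_mul_exp_neg_mul_Ioi two_pos hr]
  have h2 : Real.Gamma 2 = 1 := by
    rw [(by norm_num : (2:ℝ) = 1 + 1), Real.Gamma_add_one one_ne_zero, Real.Gamma_one]; ring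
  rw [h2]
  field_simp
  simp [hr.ne']


lemma chebyshev_anti {Ω : Type*} [MeasurableSpace Ω] (μ : Measure Ω) [IsProbabilityMeasure μ]
    (f g : Ω → ℝ) (hf : Integrable f μ) (hg : Integrable g μ)
    (hfg : Integrable (fun ω => f ω * g ω) μ)
    (h : ∀ ω ω', (f ω - f ω') * (g ω - g ω') ≤ 0) :
    ∫ ω, f ω * g ω ∂μ ≤ (∫ ω, f ω ∂μ) * ∫ ω, g ω ∂μ := by
  have key : ∫ z : Ω × Ω, (f z.1 - f z.2) * (g z.1 - g z.2) ∂(μ.prod μ) ≤ 0 :=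
    integral_nonpos fun z => h z.1 z.2
  have h11 : Integrable (fun z : Ω × Ω => f z.1 * g z.1) (μ.prod μ) := by
    have := hfg.mul_prod (integrable_const (1:ℝ)) (ν := μ)
    simpa using this
  have h22 : Integrable (fun z : Ω × Ω => f z.2 * g z.2) (μ.prod μ) := by
    have := (integrable_const (1:ℝ)).mul_prod hfg (μ := μ)
    simpa using this
  have h12 : Integrable (fun z : Ω × Ω => f z.1 * g z.2) (μ.prod μ) := hf.mul_prod hg
  have h21 : Integrable (fun z : Ω × Ω => g z.1 * f z.2) (μ.prod μ) := hg.mul_prod hf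
  have expand : ∫ z : Ω × Ω, (f z.1 - f z.2) * (g z.1 - g z.2) ∂(μ.prod μ)
      = (∫ ω, f ω * g ω ∂μ) - (∫ ω, f ω ∂μ) * (∫ ω, g ω ∂μ)
        - (∫ ω, g ω ∂μ) * (∫ ω, f ω ∂μ) + ∫ ω, f ω * g ω ∂μ := by
    have : (fun z : Ω × Ω => (f z.1 - f z.2) * (g z.1 - g z.2))
        = fun z => f z.1 * g z.1 - f z.1 * g z.2 - g z.1 * f z.2 + f z.2 * g z.2 := by
      funext z; ring
    have ha : Integrable (fun z : Ω × Ω => f z.1 * g z.1 - f z.1 * g z.2 - g z.1 * f z.2)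
        (μ.prod μ) := (h11.sub h12).sub h21
    have hb : Integrable (fun z : Ω × Ω => f z.1 * g z.1 - f z.1 * g z.2)
        (μ.prod μ) := h11.sub h12
    rw [this, integral_add ha h22, integral_sub hb h21,
      integral_sub h11 h12, integral_prod_mul f g, integral_prod_mul g f]
    have e1 : ∫ z : Ω × Ω, f z.1 * g z.1 ∂(μ.prod μ) = ∫ ω, f ω * g ω ∂μ := by
      have := integral_prod_mul (μ := μ) (ν := μ) (fun ω => f ω * g ω) (fun _ => (1:ℝ))
      simpa using this
    have e2 : ∫ z : Ω × Ω, f z.2 * g z.2 ∂(μ.prod μ) = ∫ ω, f ω * g ω ∂μ := by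
      have := integral_prod_mul (μ := μ) (ν := μ) (fun _ => (1:ℝ)) (fun ω => f ω * g ω)
      simpa using this
    rw [e1, e2]
  rw [expand] at key
  nlinarith [key]

lemma jensen_exp_tangent {Ω : Type*} [MeasurableSpace Ω] (μ : Measure Ω)
    [IsProbabilityMeasure μ] (f : Ω → ℝ) (hf : Integrable f μ)
    (hef : Integrable (fun ω => exp (f ω)) μ) :
    exp (∫ ω, f ω ∂μ) ≤ ∫ ω, exp (f ω) ∂μ := by
  set c := ∫ ω, f ω ∂μ
  have h : ∀ ω, exp c * (f ω - c + 1) ≤ exp (f ω) := by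
    intro ω
    have := Real.add_one_le_exp (f ω - c)
    calc exp c * (f ω - c + 1) ≤ exp c * exp (f ω - c) := by
          apply mul_le_mul_of_nonneg_left _ (exp_pos c).le; linarith
      _ = exp (f ω) := by rw [← Real.exp_add]; ring_nf
  have hint : Integrable (fun ω => exp c * (f ω - c + 1)) μ :=
    (((hf.sub (integrable_const c)).add (integrable_const 1)).const_mul _)
  have := integral_mono hint hef h
  have hone : ∫ ω, (f ω - c + 1) ∂μ = 1 := by
    have hsub : Integrable (fun ω => f ω - c) μ := hf.sub (integrable_const c)
    rw [integral_add hsub (integrable_const 1), integral_sub hf (integrable_const c)]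
    simp [integral_const, measure_univ, c]
  rw [integral_const_mul, hone, mul_one] at this
  exact this



variable {Ω : Type*} [MeasureSpace Ω] [IsProbabilityMeasure (ℙ : Measure Ω)]

theorem LCFS_MG1_peak_age_deterministic_worst'
    (X S : Ω → ℝ) (lam mu : ℝ) (hlam : 0 < lam) (hmu : 0 < mu)
    (hXmeas : Measurable X) (hSmeas : Measurable S)
    (hX : Measure.map X ℙ = expMeasure lam)
    (hSnn : ∀ᵐ ω ∂ℙ, 0 ≤ S ω) (hSint : Integrable S ℙ)
    (hindep : IndepFun X S ℙ)
    (hES : 𝔼[S] = 1 / mu)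
    (hMS : 0 < 𝔼[fun ω => exp (-lam * S ω)]) :
    𝔼[X] / (ℙ {ω | S ω < X ω}).toReal +
      𝔼[fun ω => S ω * Set.indicator {ω' | S ω' < X ω'} (fun _ => (1:ℝ)) ω] /
        (ℙ {ω | S ω < X ω}).toReal ≤ (1 / lam) * exp (lam / mu) + 1 / mu ∧
    𝔼[X] / (ℙ {ω | (1:ℝ) / mu < X ω}).toReal +
      𝔼[fun ω => (1 / mu) * Set.indicator {ω' | (1:ℝ) / mu < X ω'} (fun _ => (1:ℝ)) ω] /
        (ℙ {ω | (1:ℝ) / mu < X ω}).toReal = (1 / lam) * exp (lam / mu) + 1 / mu := by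
  haveI hPX : IsProbabilityMeasure (expMeasure lam) := isProbabilityMeasure_expMeasure hlam
  set μS := Measure.map S ℙ with hμS
  haveI : IsProbabilityMeasure μS := Measure.isProbabilityMeasure_map hSmeas.aemeasurable
  have hmap : Measure.map (fun ω => (S ω, X ω)) ℙ = μS.prod (expMeasure lam) := by
    rw [← hX]
    exact (indepFun_iff_map_prod_eq_prod_map_map hSmeas.aemeasurable
      hXmeas.aemeasurable).1 hindep.symm
  have hSnn' : ∀ᵐ s ∂μS, 0 ≤ s := by
    rw [hμS]
    exact (ae_map_iff hSmeas.aemeasurable measurableSet_Ici).2 hSnn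
  set A : Set (ℝ × ℝ) := {p : ℝ × ℝ | p.1 < p.2} with hA_def
  have hA : MeasurableSet A := measurableSet_lt measurable_fst measurable_snd
  -- integrability
  have I1 : Integrable (fun ω => exp (-lam * S ω)) ℙ := by
    refine Integrable.mono' (integrable_const 1)
      ((hSmeas.const_mul (-lam)).exp.aestronglyMeasurable) ?_
    filter_upwards [hSnn] with ω h
    rw [Real.norm_eq_abs, abs_of_pos (exp_pos _)]
    exact exp_le_one_iff.2 (by nlinarith)
  have I1S : Integrable (fun s : ℝ => exp (-lam * s)) μS := by
    rw [hμS]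
    exact (integrable_map_measure ((measurable_id'.const_mul (-lam)).exp.aestronglyMeasurable)
      hSmeas.aemeasurable).2 I1
  have I2 : Integrable (fun ω => S ω * exp (-lam * S ω)) ℙ := by
    refine Integrable.mono' hSint.abs
      (hSmeas.aestronglyMeasurable.mul (hSmeas.const_mul (-lam)).exp.aestronglyMeasurable) ?_
    filter_upwards [hSnn] with ω h
    rw [Real.norm_eq_abs, abs_mul, abs_of_pos (exp_pos _)]
    have : rexp (-lam * S ω) ≤ 1 := exp_le_one_iff.2 (by nlinarith)
    nlinarith [abs_nonneg (S ω)]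
  -- P(S < X) = E[exp(-lam S)]
  have hPSX : ℙ {ω | S ω < X ω} = ENNReal.ofReal (∫ ω, exp (-lam * S ω) ∂ℙ) := by
    have hpre : {ω | S ω < X ω} = (fun ω => (S ω, X ω)) ⁻¹' A := rfl
    rw [hpre, ← Measure.map_apply (hSmeas.prodMk hXmeas) hA, hmap, Measure.prod_apply hA]
    have h1 : ∫⁻ s, expMeasure lam (Prod.mk s ⁻¹' A) ∂μS
        = ∫⁻ s, ENNReal.ofReal (exp (-lam * s)) ∂μS := by
      refine lintegral_congr_ae ?_
      filter_upwards [hSnn'] with s hs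
      have : Prod.mk s ⁻¹' A = Ioi s := rfl
      rw [this, expMeasure_Ioi hlam hs, neg_mul]
    rw [h1, ← ofReal_integral_eq_lintegral_ofReal I1S
      (ae_of_all _ fun s => (exp_pos _).le)]
    congr 1
    rw [hμS]
    exact integral_map hSmeas.aemeasurable
      ((measurable_id'.const_mul (-lam)).exp.aestronglyMeasurable)
  -- E[S 1_{S<X}] = E[S exp(-lam S)]
  have hind : (∫ ω, S ω * Set.indicator {ω' | S ω' < X ω'} (fun _ => (1:ℝ)) ω ∂ℙ)
      = ∫ ω, S ω * exp (-lam * S ω) ∂ℙ := by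
    set F : ℝ × ℝ → ℝ := fun p => p.1 * A.indicator (fun _ => (1:ℝ)) p with hF_def
    have hFmeas : Measurable F := measurable_fst.mul (measurable_const.indicator hA)
    have hcomp : (fun ω => S ω * Set.indicator {ω' | S ω' < X ω'} (fun _ => (1:ℝ)) ω)
        = fun ω => F (S ω, X ω) := by
      funext ω
      simp only [hF_def, Set.indicator_apply, mem_setOf_eq, hA_def]
    have hfst : Integrable (fun p : ℝ × ℝ => p.1) (μS.prod (expMeasure lam)) := by
      have hid : Integrable (fun s : ℝ => s) μS := by
        rw [hμS]
        exact (integrable_map_measure measurable_id'.aestronglyMeasurable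
          hSmeas.aemeasurable).2 hSint
      have := hid.mul_prod (integrable_const (1:ℝ)) (ν := expMeasure lam)
      simpa using this
    have hFint : Integrable F (μS.prod (expMeasure lam)) := by
      have := hfst.bdd_mul (f := fun p => A.indicator (fun _ => (1:ℝ)) p)
        ((measurable_const.indicator hA).aestronglyMeasurable)
        (c := 1) (ae_of_all _ fun p => by rw [Real.norm_eq_abs]; by_cases h : p ∈ A <;>
          simp [Set.indicator_apply, h])
      refine this.congr (ae_of_all _ fun p => ?_)
      simp [hF_def, mul_comm]
    rw [hcomp, ← integral_map (hSmeas.prodMk hXmeas).aemeasurable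
      hFmeas.aestronglyMeasurable, hmap, integral_prod F hFint]
    have hinner : ∀ s : ℝ, (∫ x, F (s, x) ∂(expMeasure lam))
        = s * (expMeasure lam (Ioi s)).toReal := by
      intro s
      have : (fun x => F (s, x)) = fun x => s * (Ioi s).indicator (fun _ => (1:ℝ)) x := by
        funext x
        simp only [hF_def, Set.indicator_apply, mem_setOf_eq, hA_def, mem_Ioi]
      rw [this, integral_const_mul, integral_indicator_const (1:ℝ) measurableSet_Ioi,
        smul_eq_mul, mul_one, measureReal_def]
    simp_rw [hinner]
    have h2 : (∫ s, s * (expMeasure lam (Ioi s)).toReal ∂μS)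
        = ∫ s, s * exp (-lam * s) ∂μS := by
      refine integral_congr_ae ?_
      filter_upwards [hSnn'] with s hs
      rw [expMeasure_Ioi hlam hs, ENNReal.toReal_ofReal (exp_pos _).le, neg_mul]
    rw [h2, hμS]
    exact integral_map hSmeas.aemeasurable
      (measurable_id'.mul ((measurable_id'.const_mul (-lam)).exp)).aestronglyMeasurable
  have hEX : 𝔼[X] = 1 / lam := by
    have : 𝔼[X] = ∫ x, x ∂(Measure.map X ℙ) :=
      (integral_map hXmeas.aemeasurable aestronglyMeasurable_id).symm
    rw [this, hX, expMeasure_mean hlam]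
  set E := ∫ ω, exp (-lam * S ω) ∂ℙ with hE_def
  have hE : 0 < E := hMS
  have hPtoReal : (ℙ {ω | S ω < X ω}).toReal = E := by
    rw [hPSX, ENNReal.toReal_ofReal hE.le]
  -- Chebyshev / FKG
  have hcheb : (∫ ω, S ω * exp (-lam * S ω) ∂ℙ) ≤ (1 / mu) * E := by
    have h := chebyshev_anti ℙ S (fun ω => exp (-lam * S ω)) hSint I1 I2 ?_
    · rw [show (∫ ω, S ω ∂ℙ) = 1 / mu from hES] at h
      exact h
    · intro ω ω'
      rcases le_total (S ω) (S ω') with h | h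
      · apply mul_nonpos_of_nonpos_of_nonneg (by linarith)
        exact sub_nonneg.2 (exp_le_exp.2 (by nlinarith))
      · apply mul_nonpos_of_nonneg_of_nonpos (by linarith)
        exact sub_nonpos.2 (exp_le_exp.2 (by nlinarith))
  -- Jensen
  have hJ : exp (-(lam / mu)) ≤ E := by
    have h := jensen_exp_tangent ℙ (fun ω => -lam * S ω) (hSint.const_mul (-lam)) I1
    rwa [integral_const_mul, show (∫ ω, S ω ∂ℙ) = 1 / mu from hES,
      show -lam * (1 / mu) = -(lam / mu) by ring] at h
  constructor
  · rw [hEX, hPtoReal, hind]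
    have t1 : 1 / lam / E ≤ 1 / lam * exp (lam / mu) := by
      rw [div_eq_mul_inv]
      apply mul_le_mul_of_nonneg_left _ (by positivity : (0:ℝ) ≤ 1 / lam)
      calc E⁻¹ ≤ (exp (-(lam / mu)))⁻¹ := by
            apply inv_anti₀ (exp_pos _) hJ
        _ = exp (lam / mu) := by rw [exp_neg, inv_inv]
    have t2 : (∫ ω, S ω * exp (-lam * S ω) ∂ℙ) / E ≤ 1 / mu :=
      (div_le_iff₀ hE).2 (by linarith)
    exact add_le_add t1 t2
  · have hset : MeasurableSet {ω | (1:ℝ) / mu < X ω} :=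
      measurableSet_lt measurable_const hXmeas
    have hP0 : ℙ {ω | (1:ℝ) / mu < X ω} = ENNReal.ofReal (exp (-(lam / mu))) := by
      have hpre : {ω | (1:ℝ) / mu < X ω} = X ⁻¹' (Ioi (1 / mu)) := rfl
      rw [hpre, ← Measure.map_apply hXmeas measurableSet_Ioi, hX,
        expMeasure_Ioi hlam (by positivity), show lam * (1 / mu) = lam / mu by ring]
    have hP0t : (ℙ {ω | (1:ℝ) / mu < X ω}).toReal = exp (-(lam / mu)) := by
      rw [hP0, ENNReal.toReal_ofReal (exp_pos _).le]
    have hI0 : 𝔼[fun ω => (1 / mu) * Set.indicator {ω' | (1:ℝ) / mu < X ω'}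
        (fun _ => (1:ℝ)) ω] = (1 / mu) * exp (-(lam / mu)) := by
      rw [integral_const_mul, integral_indicator_const (1:ℝ) hset, smul_eq_mul, mul_one, measureReal_def, hP0t]
    rw [hEX, hP0t, hI0, mul_div_assoc, div_self (exp_ne_zero _), mul_one,
      div_eq_mul_inv, exp_neg, inv_inv]

end AuxLemmas


/-- Peak age of the preemptive LCFS M/G/1 queue is maximized by deterministic
service: `E[X]/P(S<X) + E[S·1{S<X}]/P(S<X) ≤ (1/λ)e^{λ/μ} + 1/μ`, and the
right side is the peak age when `S = 1/μ` deterministically. -/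
theorem LCFS_MG1_peak_age_deterministic_worst
    {Ω : Type*} [MeasureSpace Ω] [IsProbabilityMeasure (ℙ : Measure Ω)]
    (X S : Ω → ℝ) (lam mu : ℝ) (hlam : 0 < lam) (hmu : 0 < mu)
    (hXmeas : Measurable X) (hSmeas : Measurable S)
    (hX : Measure.map X ℙ = expMeasure lam)
    (hSnn : ∀ᵐ ω ∂ℙ, 0 ≤ S ω) (hSint : Integrable S ℙ)
    (hindep : IndepFun X S ℙ)
    (hES : 𝔼[S] = 1 / mu)
    (hMS : 0 < 𝔼[fun ω => exp (-lam * S ω)]) :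
    𝔼[X] / (ℙ {ω | S ω < X ω}).toReal +
      𝔼[fun ω => S ω * Set.indicator {ω' | S ω' < X ω'} (fun _ => (1:ℝ)) ω] /
        (ℙ {ω | S ω < X ω}).toReal ≤ (1 / lam) * exp (lam / mu) + 1 / mu ∧
    𝔼[X] / (ℙ {ω | (1:ℝ) / mu < X ω}).toReal +
      𝔼[fun ω => (1 / mu) * Set.indicator {ω' | (1:ℝ) / mu < X ω'} (fun _ => (1:ℝ)) ω] /
        (ℙ {ω | (1:ℝ) / mu < X ω}).toReal = (1 / lam) * exp (lam / mu) + 1 / mu := by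
  exact LCFS_MG1_peak_age_deterministic_worst' X S lam mu hlam hmu hXmeas hSmeas hX hSnn
    hSint hindep hES hMS
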